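/- Let f : ℝⁿ → ℝ be C² semi-algebraic, ω(x) = 1 + ‖x‖²/2, and k ∈ ℕ such that |f(x)| > 1/ω(x)^k for all x ∈ Γ_{f,ω} \ f⁻¹(0) with ω(x) large. Set g_-(x) = f(x) - 1/ω(x)^k. Then the set (∇g_-)⁻¹(0) ∩ {g_- = 0} is compact. -/

import Mathlib

section Aux

variable {F : Type*} [NormedAddCommGroup F] [InnerProductSpace ℝ F] [CompleteSpace F]

omit [CompleteSpace F] in
theorem stmt9_hasFDerivAt_omega (x : F) :
    HasFDerivAt (fun y : F => 1 + ‖y‖ ^ 2 / 2) (innerSL ℝ x) x := by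
  have h := (hasStrictFDerivAt_norm_sq x).hasFDerivAt
  have h2 : HasFDerivAt (fun y : F => 1 + ‖y‖ ^ 2 / 2)
      ((2⁻¹ : ℝ) • (2 • (innerSL ℝ x))) x := by
    simpa [div_eq_inv_mul, mul_comm] using (h.const_mul (2⁻¹ : ℝ)).const_add 1
  convert h2 using 1
  ext y
  simp [two_smul]
  ring

theorem stmt9_hasGradientAt_inv_omega_pow (k : ℕ) (x : F) :
    HasGradientAt (fun y : F => 1 / (1 + ‖y‖ ^ 2 / 2) ^ k)
      ((-(k * (1 + ‖x‖ ^ 2 / 2) ^ (k - 1)) / ((1 + ‖x‖ ^ 2 / 2) ^ k) ^ 2) • x) x := by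
  have hω : (0:ℝ) < 1 + ‖x‖ ^ 2 / 2 := by positivity
  have hφ : HasDerivAt (fun t : ℝ => 1 / t ^ k)
      (-(k * (1 + ‖x‖ ^ 2 / 2) ^ (k - 1)) / ((1 + ‖x‖ ^ 2 / 2) ^ k) ^ 2)
      (1 + ‖x‖ ^ 2 / 2) := by
    simpa [one_div] using (hasDerivAt_pow k (1 + ‖x‖ ^ 2 / 2)).fun_inv (by positivity)
  have h3 := hφ.comp_hasFDerivAt x (stmt9_hasFDerivAt_omega x)
  rw [hasGradientAt_iff_hasFDerivAt]
  convert h3 using 1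
  · rfl
  · rfl
  ext y
  simp [real_inner_smul_left]

end Aux

/-- If `f` is `C²`, `ω(x) = 1 + ‖x‖²/2`, `k ∈ ℕ` is such that `|f(x)| > 1/ω(x)ᵏ` for all
`x ∈ Γ_{f,ω} \ f⁻¹(0)` with `ω(x)` large, and `g₋(x) = f(x) - 1/ω(x)ᵏ`, then
`(∇g₋)⁻¹(0) ∩ {g₋ = 0}` is compact. -/
theorem stmt9 (n k : ℕ) (f g : EuclideanSpace ℝ (Fin n) → ℝ)
    (hf : ContDiff ℝ 2 f)
    (hg : ∀ x, g x = f x - 1 / (1 + ‖x‖ ^ 2 / 2) ^ k)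
    (hbound : ∃ R : ℝ, ∀ x : EuclideanSpace ℝ (Fin n),
      ¬ LinearIndependent ℝ ![gradient f x, x] → f x ≠ 0 →
      R ≤ 1 + ‖x‖ ^ 2 / 2 → 1 / (1 + ‖x‖ ^ 2 / 2) ^ k < |f x|) :
    IsCompact {x : EuclideanSpace ℝ (Fin n) | gradient g x = 0 ∧ g x = 0} := by
  obtain ⟨R, hR⟩ := hbound
  have hωpos : ∀ x : EuclideanSpace ℝ (Fin n), (0:ℝ) < 1 + ‖x‖ ^ 2 / 2 := fun x => by positivity
  set h : EuclideanSpace ℝ (Fin n) → ℝ := fun y => 1 / (1 + ‖y‖ ^ 2 / 2) ^ k with hh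
  have hgfun : g = fun y => f y - h y := funext fun y => hg y
  -- smoothness of h
  have hhsmooth : ContDiff ℝ 2 h := by
    apply ContDiff.div contDiff_const
    · exact (contDiff_const.add (contDiff_norm_sq ℝ |>.div_const 2)).pow k
    · intro x; positivity
  have hgsmooth : ContDiff ℝ 2 g := by rw [hgfun]; exact hf.sub hhsmooth
  -- gradient identity on the set
  have hgrad : ∀ x : EuclideanSpace ℝ (Fin n), gradient g x = gradient f x -
      ((-(k * (1 + ‖x‖ ^ 2 / 2) ^ (k - 1)) / ((1 + ‖x‖ ^ 2 / 2) ^ k) ^ 2) • x) := by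
    intro x
    have hdf : DifferentiableAt ℝ f x := (hf.differentiable two_ne_zero).differentiableAt
    have hdh := (stmt9_hasGradientAt_inv_omega_pow (F := EuclideanSpace ℝ (Fin n)) k x)
    have : HasGradientAt g (gradient f x -
        ((-(k * (1 + ‖x‖ ^ 2 / 2) ^ (k - 1)) / ((1 + ‖x‖ ^ 2 / 2) ^ k) ^ 2) • x)) x := by
      rw [hgfun, hasGradientAt_iff_hasFDerivAt, map_sub]
      exact (hdf.hasGradientAt.hasFDerivAt).sub hdh.hasFDerivAt
    exact this.gradient
  -- closedness
  have hclosed : IsClosed {x : EuclideanSpace ℝ (Fin n) | gradient g x = 0 ∧ g x = 0} := by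
    have hcont : Continuous (gradient g) := by
      have h1 : Continuous (fderiv ℝ g) := hgsmooth.continuous_fderiv two_ne_zero
      have : Continuous fun x : EuclideanSpace ℝ (Fin n) =>
          (InnerProductSpace.toDual ℝ (EuclideanSpace ℝ (Fin n))).symm (fderiv ℝ g x) :=
        (InnerProductSpace.toDual ℝ (EuclideanSpace ℝ (Fin n))).symm.continuous.comp h1
      exact this
    exact (isClosed_singleton.preimage hcont).inter
      (isClosed_singleton.preimage hgsmooth.continuous)
  -- boundedness
  apply Metric.isCompact_of_isClosed_isBounded hclosed
  rw [Metric.isBounded_iff_subset_closedBall 0]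
  refine ⟨Real.sqrt (2 * |R|), fun x hx => ?_⟩
  obtain ⟨hx1, hx2⟩ := hx
  -- value of f at x
  have hfx : f x = 1 / (1 + ‖x‖ ^ 2 / 2) ^ k := by
    have := hg x; rw [hx2] at this; linarith
  have hfxpos : 0 < f x := by rw [hfx]; positivity
  -- gradient f x is a multiple of x
  set c : ℝ := -(k * (1 + ‖x‖ ^ 2 / 2) ^ (k - 1)) / ((1 + ‖x‖ ^ 2 / 2) ^ k) ^ 2 with hc
  have hgfx : gradient f x = c • x := by
    have := hgrad x; rw [hx1] at this
    linear_combination (norm := module) -this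
  have hdep : ¬ LinearIndependent ℝ ![gradient f x, x] := by
    intro hli
    rw [LinearIndependent.pair_iff] at hli
    have := (hli 1 (-c) (by rw [hgfx]; module)).1
    exact one_ne_zero this
  -- omega is small
  have hωlt : 1 + ‖x‖ ^ 2 / 2 < R := by
    by_contra hcon
    push_neg at hcon
    have := hR x hdep hfxpos.ne' hcon
    rw [abs_of_pos hfxpos, hfx] at this
    exact lt_irrefl _ this
  -- conclude norm bound
  have hnormsq : ‖x‖ ^ 2 ≤ 2 * |R| := by
    have : ‖x‖ ^ 2 / 2 < R := by linarith
    have hR' : R ≤ |R| := le_abs_self R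
    nlinarith
  simp only [Metric.mem_closedBall, dist_zero_right]
  have hs : ‖x‖ ≤ Real.sqrt (2 * |R|) := by
    rw [show ‖x‖ = Real.sqrt (‖x‖ ^ 2) by rw [Real.sqrt_sq (norm_nonneg x)]]
    exact Real.sqrt_le_sqrt hnormsq
  exact hs
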